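/- Let X be a locally compact subset of ℝ^N equipped with a positive Borel measure μ, and let E be a vector sublattice of the real-valued functions on X containing the restrictions to X of the test functions 1, pr_1, …, pr_N, −pr_1, …, −pr_N and Σ_{k=1}^N pr_k². Let (T_n) be a sequence of weakly nonlinear (sublinear and translatable) and monotone operators from E into E such that for each of these 2N+2 test functions h one has T_n(h)(x) → h(x) for μ-almost every x ∈ X. Then for every f ∈ E that is bounded and whose set of points of discontinuity is μ-null, one has T_n(f)(x) → f(x) for μ-almost every x ∈ X. -/

import Mathlib

open MeasureTheory Filter Topology Set

/-- **Theorem `thm_a.e.Conv` (ii).** Korovkin-type theorem for a.e.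
convergence: weakly nonlinear (sublinear and translatable) monotone operators on a
vector sublattice `E` of functions on a locally compact subset `X ⊆ ℝ^N`, with the
`2N+2` test functions `1, ±pr_1, …, ±pr_N, Σ pr_k²`; conclusion for every bounded
a.e.-continuous member of `E`. -/
theorem korovkin_ae_weaklyNonlinear {N : ℕ} (X : Set (Fin N → ℝ)) [LocallyCompactSpace X]
    (μ : Measure X)
    (E : Set (X → ℝ))
    -- `E` is a vector sublattice of `𝓕(X)`
    (hEadd : ∀ f ∈ E, ∀ g ∈ E, f + g ∈ E)
    (hEsmul : ∀ (c : ℝ), ∀ f ∈ E, c • f ∈ E)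
    (hEsup : ∀ f ∈ E, ∀ g ∈ E, f ⊔ g ∈ E)
    -- `E` contains the test functions
    (hone : (fun _ : X => (1 : ℝ)) ∈ E)
    (hpr : ∀ k : Fin N, (fun x : X => (x : Fin N → ℝ) k) ∈ E)
    (hprneg : ∀ k : Fin N, (fun x : X => -((x : Fin N → ℝ) k)) ∈ E)
    (hsq : (fun x : X => ∑ k, ((x : Fin N → ℝ) k) ^ 2) ∈ E)
    -- `(T n)` is a sequence of sublinear and monotone operators from `E` into `E`
    (T : ℕ → (X → ℝ) → (X → ℝ))
    (hmap : ∀ n, ∀ f ∈ E, T n f ∈ E)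
    (hsubadd : ∀ n, ∀ f ∈ E, ∀ g ∈ E, T n (f + g) ≤ T n f + T n g)
    (hhom : ∀ n, ∀ (α : ℝ), 0 ≤ α → ∀ f ∈ E, T n (α • f) = α • T n f)
    (hmono : ∀ n, ∀ f ∈ E, ∀ g ∈ E, f ≤ g → T n f ≤ T n g)
    (htrans : ∀ n, ∀ f ∈ E, ∀ (α : ℝ), 0 ≤ α →
      T n (f + α • (fun _ : X => (1 : ℝ))) = T n f + α • T n (fun _ : X => (1 : ℝ)))
    -- a.e. convergence on the test functions
    (htest1 : ∀ᵐ x ∂μ, Tendsto (fun n => T n (fun _ => 1) x) atTop (𝓝 1))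
    (htestpr : ∀ k : Fin N, ∀ᵐ x ∂μ,
      Tendsto (fun n => T n (fun y : X => (y : Fin N → ℝ) k) x) atTop
        (𝓝 ((x : Fin N → ℝ) k)))
    (htestprneg : ∀ k : Fin N, ∀ᵐ x ∂μ,
      Tendsto (fun n => T n (fun y : X => -((y : Fin N → ℝ) k)) x) atTop
        (𝓝 (-((x : Fin N → ℝ) k))))
    (htestsq : ∀ᵐ x ∂μ,
      Tendsto (fun n => T n (fun y : X => ∑ k, ((y : Fin N → ℝ) k) ^ 2) x) atTop
        (𝓝 (∑ k, ((x : Fin N → ℝ) k) ^ 2)))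
    -- conclusion, for every bounded a.e. continuous `f ∈ E`
    (f : X → ℝ) (hfE : f ∈ E)
    (hfb : ∃ M : ℝ, ∀ x, |f x| ≤ M)
    (hfc : μ {x | ¬ ContinuousAt f x} = 0) :
    ∀ᵐ x ∂μ, Tendsto (fun n => T n f x) atTop (𝓝 (f x)) := by

  classical
  obtain ⟨M, hM⟩ := hfb
  have h0E : (0 : X → ℝ) ∈ E := by
    have h := hEsmul 0 _ hone
    simpa using h
  have hT0 : ∀ n, T n (0 : X → ℝ) = 0 := by
    intro n
    have h := hhom n 0 le_rfl _ hone
    simpa using h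
  -- closure of E under finite sums + finite sublinearity
  have key : ∀ n (F : Fin N → X → ℝ), (∀ i, F i ∈ E) → ∀ s : Finset (Fin N),
      (∑ i ∈ s, F i) ∈ E ∧ T n (∑ i ∈ s, F i) ≤ ∑ i ∈ s, T n (F i) := by
    intro n F hF s
    induction s using Finset.cons_induction with
    | empty =>
      rw [Finset.sum_empty, Finset.sum_empty]
      exact ⟨h0E, le_of_eq (hT0 n)⟩
    | cons a s ha ih =>
      rw [Finset.sum_cons, Finset.sum_cons]
      refine ⟨hEadd _ (hF a) _ ih.1, ?_⟩
      exact (hsubadd n _ (hF a) _ ih.1).trans (add_le_add le_rfl ih.2)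
  have hcont : ∀ᵐ x ∂μ, ContinuousAt f x := by
    rw [ae_iff]; exact hfc
  filter_upwards [htest1, ae_all_iff.2 htestpr, ae_all_iff.2 htestprneg, htestsq, hcont]
    with x₀ h1 hp hpn hs hc
  rw [Metric.tendsto_atTop]
  intro ε hε
  obtain ⟨δ, hδpos, hδ⟩ := Metric.continuousAt_iff.1 hc (ε / 2) (by linarith)
  set a : Fin N → ℝ := (x₀ : Fin N → ℝ) with ha
  have hM0 : 0 ≤ M := (abs_nonneg _).trans (hM x₀)
  have hMx := abs_le.1 (hM x₀)
  set C : ℝ := 2 * M / δ ^ 2 with hC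
  have hC0 : 0 ≤ C := by positivity
  set q : X → ℝ := fun y => ∑ k, ((y : Fin N → ℝ) k - a k) ^ 2 with hqdef
  have hq0 : ∀ y, 0 ≤ q y := fun y => Finset.sum_nonneg fun k _ => sq_nonneg _
  have hdistq : ∀ y : X, (dist y x₀) ^ 2 ≤ q y := by
    intro y
    have hle : dist y x₀ ≤ Real.sqrt (q y) := by
      rw [Subtype.dist_eq, dist_pi_le_iff (Real.sqrt_nonneg _)]
      intro k
      have h1' : ((y : Fin N → ℝ) k - a k) ^ 2 ≤ q y :=
        Finset.single_le_sum (f := fun k => ((y : Fin N → ℝ) k - a k) ^ 2)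
          (fun k _ => sq_nonneg _) (Finset.mem_univ k)
      calc dist ((y : Fin N → ℝ) k) (a k) = |(y : Fin N → ℝ) k - a k| := Real.dist_eq _ _
        _ = Real.sqrt (((y : Fin N → ℝ) k - a k) ^ 2) := (Real.sqrt_sq_eq_abs _).symm
        _ ≤ Real.sqrt (q y) := Real.sqrt_le_sqrt h1'
    calc (dist y x₀) ^ 2 ≤ (Real.sqrt (q y)) ^ 2 := by
          exact pow_le_pow_left₀ dist_nonneg hle 2
      _ = q y := Real.sq_sqrt (hq0 y)
  have hpt : ∀ y : X, |f y - f x₀| ≤ ε / 2 + C * q y := by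
    intro y
    by_cases hd : dist y x₀ < δ
    · have h' := hδ hd
      rw [Real.dist_eq] at h'
      have hcq : 0 ≤ C * q y := mul_nonneg hC0 (hq0 y)
      linarith
    · push_neg at hd
      have h2 : δ ^ 2 ≤ q y := le_trans (pow_le_pow_left₀ hδpos.le hd 2) (hdistq y)
      have h3 : 2 * M ≤ C * q y := by
        have hCd : C * δ ^ 2 = 2 * M := by
          rw [hC]; field_simp
        nlinarith
      have hy := abs_le.1 (hM y)
      rw [abs_le]
      constructor <;> [skip; skip] <;> nlinarith [hMx.1, hMx.2, hy.1, hy.2]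
  -- decomposition of q
  set F : Fin N → (X → ℝ) := fun k =>
    (max 0 (2 * a k)) • (fun y : X => -((y : Fin N → ℝ) k)) +
      (max 0 (-(2 * a k))) • (fun y : X => (y : Fin N → ℝ) k) with hF
  have hFE : ∀ k, F k ∈ E := fun k =>
    hEadd _ (hEsmul _ _ (hprneg k)) _ (hEsmul _ _ (hpr k))
  set b : ℝ := ∑ k, (a k) ^ 2 with hb
  have hb0 : 0 ≤ b := Finset.sum_nonneg fun k _ => sq_nonneg _
  set sf : X → ℝ := fun x : X => ∑ k, ((x : Fin N → ℝ) k) ^ 2 with hsf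
  have keypt : ∀ (u v : ℝ),
      (u - v) ^ 2 = u ^ 2 + (max 0 (2 * v) * (-u) + max 0 (-(2 * v)) * u) + v ^ 2 := by
    intro u v
    rcases le_total 0 v with h | h
    · rw [max_eq_right (by linarith), max_eq_left (by linarith)]; ring
    · rw [max_eq_left (by linarith), max_eq_right (by linarith)]; ring
  have hqdec : q = (sf + ∑ k, F k) + b • (fun _ : X => (1 : ℝ)) := by
    funext y
    simp only [hqdef, hsf, hF, hb, Pi.add_apply, Pi.smul_apply, Finset.sum_apply,
      smul_eq_mul, mul_one, Pi.neg_apply]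
    rw [← Finset.sum_add_distrib, ← Finset.sum_add_distrib]
    exact Finset.sum_congr rfl fun k _ => keypt _ _
  have hglE : (∑ k, F k) ∈ E := (key 0 F hFE Finset.univ).1
  have hqE : q ∈ E := by
    rw [hqdec]
    exact hEadd _ (hEadd _ hsq _ hglE) _ (hEsmul b _ hone)
  -- upper bound for T n q at x₀
  have hTq_ub : ∀ n, T n q x₀ ≤ T n sf x₀ +
      (∑ k, (max 0 (2 * a k) * T n (fun y : X => -((y : Fin N → ℝ) k)) x₀ +
        max 0 (-(2 * a k)) * T n (fun y : X => (y : Fin N → ℝ) k) x₀)) +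
      b * T n (fun _ : X => (1 : ℝ)) x₀ := by
    intro n
    have e2 : T n q = T n (sf + ∑ k, F k) + b • T n (fun _ : X => (1 : ℝ)) := by
      rw [hqdec]; exact htrans n _ (hEadd _ hsq _ hglE) b hb0
    have h3 : T n (sf + ∑ k, F k) ≤ T n sf + T n (∑ k, F k) :=
      hsubadd n _ hsq _ hglE
    have h4 : T n (∑ k, F k) ≤ ∑ k, T n (F k) := (key n F hFE Finset.univ).2
    have h5 : ∀ k, T n (F k) x₀ ≤
        max 0 (2 * a k) * T n (fun y : X => -((y : Fin N → ℝ) k)) x₀ +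
        max 0 (-(2 * a k)) * T n (fun y : X => (y : Fin N → ℝ) k) x₀ := by
      intro k
      have h6 := hsubadd n ((max 0 (2 * a k)) • (fun y : X => -((y : Fin N → ℝ) k)))
        (hEsmul _ _ (hprneg k)) ((max 0 (-(2 * a k))) • (fun y : X => (y : Fin N → ℝ) k))
        (hEsmul _ _ (hpr k))
      rw [hhom n _ (le_max_left 0 _) _ (hprneg k), hhom n _ (le_max_left 0 _) _ (hpr k)] at h6
      have h7 := h6 x₀
      simpa [smul_eq_mul] using h7
    have e2' := congrFun e2 x₀
    simp only [Pi.add_apply, Pi.smul_apply, smul_eq_mul] at e2'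
    have h3' := h3 x₀
    simp only [Pi.add_apply] at h3'
    have h4' := h4 x₀
    rw [Finset.sum_apply] at h4'
    have h8 : (∑ k, T n (F k) x₀) ≤
        ∑ k, (max 0 (2 * a k) * T n (fun y : X => -((y : Fin N → ℝ) k)) x₀ +
          max 0 (-(2 * a k)) * T n (fun y : X => (y : Fin N → ℝ) k) x₀) :=
      Finset.sum_le_sum fun k _ => h5 k
    linarith
  -- T n q x₀ → 0
  have hTq_nonneg : ∀ n, 0 ≤ T n q x₀ := by
    intro n
    have h9 : (0 : X → ℝ) ≤ q := fun y => hq0 y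
    have h10 := hmono n 0 h0E q hqE h9
    have h11 := h10 x₀
    rwa [hT0 n] at h11
  have hRlim : Tendsto (fun n => T n sf x₀ +
      (∑ k, (max 0 (2 * a k) * T n (fun y : X => -((y : Fin N → ℝ) k)) x₀ +
        max 0 (-(2 * a k)) * T n (fun y : X => (y : Fin N → ℝ) k) x₀)) +
      b * T n (fun _ : X => (1 : ℝ)) x₀) atTop
      (𝓝 (b + (∑ k, (max 0 (2 * a k) * (-(a k)) + max 0 (-(2 * a k)) * (a k))) + b * 1)) := by
    refine Tendsto.add (Tendsto.add ?_ ?_) (h1.const_mul b)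
    · exact hs
    · exact tendsto_finset_sum _ fun k _ =>
        (((hpn k).const_mul _).add ((hp k).const_mul _))
  have hval : b + (∑ k, (max 0 (2 * a k) * (-(a k)) + max 0 (-(2 * a k)) * (a k))) + b * 1
      = 0 := by
    have h12 : ∀ k, max 0 (2 * a k) * (-(a k)) + max 0 (-(2 * a k)) * (a k)
        = -(2 * (a k) ^ 2) := by
      intro k
      rcases le_total 0 (a k) with h | h
      · rw [max_eq_right (by linarith), max_eq_left (by linarith)]; ring
      · rw [max_eq_left (by linarith), max_eq_right (by linarith)]; ring
    rw [Finset.sum_congr rfl fun k _ => h12 k]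
    rw [hb]
    rw [Finset.sum_neg_distrib, ← Finset.mul_sum]
    ring
  rw [hval] at hRlim
  have hTq0 : Tendsto (fun n => T n q x₀) atTop (𝓝 0) :=
    squeeze_zero hTq_nonneg hTq_ub hRlim
  -- the sandwich for T n f
  set K : ℝ := M + ε with hK
  have hK0 : 0 ≤ K := by linarith
  have hKc : 0 ≤ K + f x₀ + ε / 2 := by linarith [hMx.1]
  have hKc' : 0 ≤ K + f x₀ - ε / 2 := by linarith [hMx.1]
  set one : X → ℝ := fun _ : X => (1 : ℝ) with honedef
  have hub : ∀ n, T n f x₀ ≤ C * T n q x₀ + (f x₀ + ε / 2) * T n one x₀ := by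
    intro n
    have hfub : (f + K • one) ≤ C • q + (K + f x₀ + ε / 2) • one := by
      intro y
      have h13 := abs_le.1 (hpt y)
      simp only [Pi.add_apply, Pi.smul_apply, smul_eq_mul, honedef, mul_one]
      linarith [h13.2]
    have e1 : T n (f + K • one) = T n f + K • T n one := htrans n f hfE K hK0
    have e2 : T n (C • q + (K + f x₀ + ε / 2) • one) =
        T n (C • q) + (K + f x₀ + ε / 2) • T n one :=
      htrans n _ (hEsmul C q hqE) _ hKc
    have e3 : T n (C • q) = C • T n q := hhom n C hC0 q hqE
    have le1 := hmono n _ (hEadd f hfE _ (hEsmul K _ hone)) _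
      (hEadd _ (hEsmul C q hqE) _ (hEsmul _ _ hone)) hfub
    have le1' := le1 x₀
    rw [e1, e2, e3] at le1'
    simp only [Pi.add_apply, Pi.smul_apply, smul_eq_mul] at le1'
    linarith
  have hlb : ∀ n, (f x₀ - ε / 2) * T n one x₀ - C * T n q x₀ ≤ T n f x₀ := by
    intro n
    have hflb : (K + f x₀ - ε / 2) • one ≤ (f + K • one) + C • q := by
      intro y
      have h13 := abs_le.1 (hpt y)
      simp only [Pi.add_apply, Pi.smul_apply, smul_eq_mul, honedef, mul_one]
      linarith [h13.1]
    have e1 : T n (f + K • one) = T n f + K • T n one := htrans n f hfE K hK0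
    have e3 : T n (C • q) = C • T n q := hhom n C hC0 q hqE
    have e4 : T n ((K + f x₀ - ε / 2) • one) = (K + f x₀ - ε / 2) • T n one :=
      hhom n _ hKc' _ hone
    have le2 := hmono n _ (hEsmul _ _ hone) _
      (hEadd _ (hEadd f hfE _ (hEsmul K _ hone)) _ (hEsmul C q hqE)) hflb
    have le3 := hsubadd n _ (hEadd f hfE _ (hEsmul K _ hone)) _ (hEsmul C q hqE)
    have le2' := le2 x₀
    have le3' := le3 x₀
    rw [e4] at le2'
    rw [e1, e3] at le3'
    have hx := le2'.trans le3'
    simp only [Pi.add_apply, Pi.smul_apply, smul_eq_mul] at hx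
    linarith
  -- limits of the bounds
  have hUlim : Tendsto (fun n => C * T n q x₀ + (f x₀ + ε / 2) * T n one x₀) atTop
      (𝓝 (f x₀ + ε / 2)) := by
    have h14 : (C * 0 + (f x₀ + ε / 2) * 1 : ℝ) = f x₀ + ε / 2 := by ring
    have h15 := (hTq0.const_mul C).add (h1.const_mul (f x₀ + ε / 2))
    rwa [h14] at h15
  have hLlim : Tendsto (fun n => (f x₀ - ε / 2) * T n one x₀ - C * T n q x₀) atTop
      (𝓝 (f x₀ - ε / 2)) := by
    have h14 : ((f x₀ - ε / 2) * 1 - C * 0 : ℝ) = f x₀ - ε / 2 := by ring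
    have h15 := (h1.const_mul (f x₀ - ε / 2)).sub (hTq0.const_mul C)
    rwa [h14] at h15
  have hU : ∀ᶠ n in atTop, C * T n q x₀ + (f x₀ + ε / 2) * T n one x₀ < f x₀ + ε :=
    hUlim.eventually_lt_const (by linarith)
  have hL : ∀ᶠ n in atTop, f x₀ - ε < (f x₀ - ε / 2) * T n one x₀ - C * T n q x₀ :=
    hLlim.eventually_const_lt (by linarith)
  obtain ⟨Nn, hNn⟩ := eventually_atTop.1 (hU.and hL)
  refine ⟨Nn, fun n hn => ?_⟩
  obtain ⟨hUn, hLn⟩ := hNn n hn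
  rw [Real.dist_eq, abs_lt]
  constructor
  · linarith [hlb n]
  · linarith [hub n]
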